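/- Let M₁ ∈ ℝ^{n₁×n₂} have rank r with r-th singular value σ_r(M₁) > 0. If L ∈ ℝ^{n₁×r}, R ∈ ℝ^{n₂×r} satisfy ‖LRᵀ − M₁‖_F ≤ σ_r(M₁)/2, then L and R have full column rank r and ‖L(LᵀL)⁻¹(RᵀR)⁻¹Rᵀ‖ ≤ 2/σ_r(M₁). -/

import Mathlib

open Matrix Finset

/-- Euclidean norm of a vector. -/
noncomputable def _root_.enorm {ι : Type*} [Fintype ι] (x : ι → ℝ) : ℝ :=
  Real.sqrt (∑ i, x i ^ 2)

/-- Frobenius norm of a matrix. -/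
noncomputable def frob {ι κ : Type*} [Fintype ι] [Fintype κ] (A : Matrix ι κ ℝ) : ℝ :=
  Real.sqrt (∑ i, ∑ j, A i j ^ 2)

/-- Matrix inner product ⟨A,B⟩ = Tr(AᵀB). -/
noncomputable def minner {ι κ : Type*} [Fintype ι] [Fintype κ] (A B : Matrix ι κ ℝ) : ℝ :=
  ∑ i, ∑ j, A i j * B i j

/-- The k-th largest singular value, via the Courant–Fischer max-min characterization. -/
noncomputable def sval {ι κ : Type*} [Fintype ι] [Fintype κ] (A : Matrix ι κ ℝ) (k : ℕ) : ℝ :=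
  sSup {t : ℝ | ∃ V : Submodule ℝ (κ → ℝ), Module.finrank ℝ V = k ∧
    ∀ x ∈ V, t * _root_.enorm x ≤ _root_.enorm (A.mulVec x)}

/-- Spectral (operator) norm = largest singular value. -/
noncomputable def spec {ι κ : Type*} [Fintype ι] [Fintype κ] (A : Matrix ι κ ℝ) : ℝ :=
  sval A 1

section helpers
variable {ι κ : Type*} [Fintype ι] [Fintype κ]

lemma enorm_eq_norm (x : ι → ℝ) :
    _root_.enorm x = ‖(WithLp.equiv 2 (ι → ℝ)).symm x‖ := by
  rw [EuclideanSpace.norm_eq]; simp [_root_.enorm, sq_abs]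

lemma enorm_nonneg (x : ι → ℝ) : 0 ≤ _root_.enorm x := Real.sqrt_nonneg _

lemma enorm_zero_real : _root_.enorm (0 : ι → ℝ) = 0 := by simp [_root_.enorm]

lemma enorm_pos_real {x : ι → ℝ} (hx : x ≠ 0) : 0 < _root_.enorm x := by
  rw [enorm_eq_norm, norm_pos_iff]
  simpa using hx

lemma enorm_eq_zero_real {x : ι → ℝ} (hx : _root_.enorm x = 0) : x = 0 := by
  by_contra h
  exact absurd hx (enorm_pos_real h).ne'

lemma dot_le (x y : ι → ℝ) : x ⬝ᵥ y ≤ _root_.enorm x * _root_.enorm y := by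
  rw [enorm_eq_norm, enorm_eq_norm]
  have := real_inner_le_norm ((WithLp.equiv 2 (ι → ℝ)).symm x) ((WithLp.equiv 2 (ι → ℝ)).symm y)
  simpa [PiLp.inner_apply, dotProduct, RCLike.inner_apply, mul_comm] using this

lemma enorm_sq (x : ι → ℝ) : _root_.enorm x ^ 2 = x ⬝ᵥ x := by
  rw [_root_.enorm, Real.sq_sqrt (by positivity)]
  simp [dotProduct, sq]

lemma enorm_add_le_real (x y : ι → ℝ) : _root_.enorm (x + y) ≤ _root_.enorm x + _root_.enorm y := by
  rw [enorm_eq_norm, enorm_eq_norm, enorm_eq_norm]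
  have : (WithLp.equiv 2 (ι → ℝ)).symm (x + y)
      = (WithLp.equiv 2 (ι → ℝ)).symm x + (WithLp.equiv 2 (ι → ℝ)).symm y := rfl
  rw [this]; exact norm_add_le _ _

lemma enorm_mulVec_le (A : Matrix ι κ ℝ) (x : κ → ℝ) :
    _root_.enorm (A *ᵥ x) ≤ frob A * _root_.enorm x := by
  rw [_root_.enorm, frob, _root_.enorm, ← Real.sqrt_mul (by positivity)]
  apply Real.sqrt_le_sqrt
  rw [Finset.sum_mul]
  apply Finset.sum_le_sum
  intro i _
  have := Finset.sum_mul_sq_le_sq_mul_sq Finset.univ (fun j => A i j) x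
  simpa [Matrix.mulVec, dotProduct] using this

lemma dot_mulVec (A : Matrix ι κ ℝ) (x : κ → ℝ) (y : ι → ℝ) :
    (A *ᵥ x) ⬝ᵥ y = x ⬝ᵥ (Aᵀ *ᵥ y) := by
  simp only [dotProduct, Matrix.mulVec, Matrix.transpose_apply, Finset.sum_mul, Finset.mul_sum]
  rw [Finset.sum_comm]
  apply Finset.sum_congr rfl; intro j _
  apply Finset.sum_congr rfl; intro i _
  ring

/-- If the Gram matrix kills `v`, so does `M`. -/
lemma gram_mulVec_eq_zero (M : Matrix ι κ ℝ) {v : κ → ℝ} (h : (Mᵀ * M) *ᵥ v = 0) :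
    M *ᵥ v = 0 := by
  have h1 : (M *ᵥ v) ⬝ᵥ (M *ᵥ v) = 0 := by
    rw [dot_mulVec, Matrix.mulVec_mulVec, h, dotProduct_zero]
  have h2 : _root_.enorm (M *ᵥ v) ^ 2 = 0 := by rw [enorm_sq]; exact h1
  exact enorm_eq_zero_real (by
    have := sq_eq_zero_iff.mp h2
    exact this)

/-- A symmetric idempotent matrix is a (weak) contraction in Euclidean norm. -/
lemma contraction (Q : Matrix ι ι ℝ) (hsym : Qᵀ = Q) (hidem : Q * Q = Q) (u : ι → ℝ) :
    _root_.enorm (Q *ᵥ u) ≤ _root_.enorm u := by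
  have h : _root_.enorm (Q *ᵥ u) ^ 2 ≤ _root_.enorm u * _root_.enorm (Q *ᵥ u) := by
    rw [enorm_sq]
    calc (Q *ᵥ u) ⬝ᵥ (Q *ᵥ u) = u ⬝ᵥ (Qᵀ *ᵥ (Q *ᵥ u)) := dot_mulVec _ _ _
      _ = u ⬝ᵥ (Q *ᵥ u) := by rw [hsym, Matrix.mulVec_mulVec, hidem]
      _ ≤ _root_.enorm u * _root_.enorm (Q *ᵥ u) := dot_le _ _
  rcases eq_or_lt_of_le (enorm_nonneg (Q *ᵥ u)) with h0 | h0
  · rw [← h0]; exact enorm_nonneg u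
  · nlinarith

end helpers

private lemma aux_key {σ' c t s e m a : ℝ} (h1 : t * e ≤ m) (h2 : m ≤ a + s)
    (h3 : s ≤ (σ' / 2) * e) (ht : σ' / 2 + c < t) (he : 0 ≤ e) : c * e ≤ a := by
  nlinarith

private lemma aux_pt {c p e nu : ℝ} (hc : 0 < c) (hsq : p ^ 2 ≤ e * nu)
    (hcx : c * e ≤ p) (hp : 0 < p) (he : 0 ≤ e) (hnu : 0 ≤ nu) : c * p ≤ nu := by
  nlinarith

private lemma aux_spec {c t ex ep : ℝ} (hc : 0 < c) (h1 : t * ex ≤ ep)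
    (h2 : c * ep ≤ ex) (hex : 0 < ex) : t * c ≤ 1 := by
  nlinarith

/-- Stmt 7: if ‖LRᵀ − M₁‖_F ≤ σ_r(M₁)/2 with rank(M₁) = r, then L, R have full column
rank and ‖L(LᵀL)⁻¹(RᵀR)⁻¹Rᵀ‖ ≤ 2/σ_r(M₁). -/
theorem stmt7 (n₁ n₂ r : ℕ) (M₁ : Matrix (Fin n₁) (Fin n₂) ℝ)
    (hrank : M₁.rank = r) (hσ : 0 < sval M₁ r)
    (L : Matrix (Fin n₁) (Fin r) ℝ) (R : Matrix (Fin n₂) (Fin r) ℝ)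
    (hclose : frob (L * Rᵀ - M₁) ≤ sval M₁ r / 2) :
    L.rank = r ∧ R.rank = r ∧
    spec (L * (Lᵀ * L)⁻¹ * (Rᵀ * R)⁻¹ * Rᵀ) ≤ 2 / sval M₁ r := by
  set σ := sval M₁ r with hσdef
  set A := L * Rᵀ with hA
  set S : Set ℝ := {t : ℝ | ∃ V : Submodule ℝ (Fin n₂ → ℝ), Module.finrank ℝ V = r ∧
    ∀ x ∈ V, t * _root_.enorm x ≤ _root_.enorm (M₁.mulVec x)} with hS
  have hSsup : σ = sSup S := rfl
  have hSne : S.Nonempty := by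
    by_contra hne
    rw [Set.not_nonempty_iff_eq_empty] at hne
    rw [hSsup, hne, Real.sSup_empty] at hσ
    exact lt_irrefl _ hσ
  -- Key extraction of an `r`-dimensional subspace on which `A` is bounded below.
  have key : ∀ c : ℝ, 0 < c → c < σ / 2 → ∃ V : Submodule ℝ (Fin n₂ → ℝ),
      Module.finrank ℝ V = r ∧ ∀ x ∈ V, c * _root_.enorm x ≤ _root_.enorm (A *ᵥ x) := by
    intro c hc hcσ
    have hlt : σ / 2 + c < sSup S := by rw [← hSsup]; linarith
    obtain ⟨t, htS, ht⟩ := exists_lt_of_lt_csSup hSne hlt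
    obtain ⟨V, hV, hVle⟩ := htS
    refine ⟨V, hV, fun x hx => ?_⟩
    have h1 := hVle x hx
    have h2 : _root_.enorm (M₁ *ᵥ x) ≤ _root_.enorm (A *ᵥ x) + _root_.enorm ((A - M₁) *ᵥ x) := by
      have hsplit : M₁ *ᵥ x = A *ᵥ x + (-((A - M₁) *ᵥ x)) := by
        rw [Matrix.sub_mulVec]; abel
      have hneg : _root_.enorm (-((A - M₁) *ᵥ x)) = _root_.enorm ((A - M₁) *ᵥ x) := by
        simp [_root_.enorm]
      calc _root_.enorm (M₁ *ᵥ x) = _root_.enorm (A *ᵥ x + (-((A - M₁) *ᵥ x))) := by rw [← hsplit]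
        _ ≤ _root_.enorm (A *ᵥ x) + _root_.enorm (-((A - M₁) *ᵥ x)) := enorm_add_le_real _ _
        _ = _root_.enorm (A *ᵥ x) + _root_.enorm ((A - M₁) *ᵥ x) := by rw [hneg]
    have h3 : _root_.enorm ((A - M₁) *ᵥ x) ≤ (σ / 2) * _root_.enorm x := by
      calc _root_.enorm ((A - M₁) *ᵥ x) ≤ frob (A - M₁) * _root_.enorm x := enorm_mulVec_le _ _
        _ ≤ (σ / 2) * _root_.enorm x := by
            apply mul_le_mul_of_nonneg_right _ (enorm_nonneg x)
            exact hclose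
    exact aux_key h1 h2 h3 ht (enorm_nonneg x)
  -- surjectivity of `Rᵀ` restricted to such a subspace
  have surj : ∀ V : Submodule ℝ (Fin n₂ → ℝ), Module.finrank ℝ V = r →
      (∀ x ∈ V, A *ᵥ x = 0 → x = 0) → ∀ w : Fin r → ℝ, ∃ x ∈ V, Rᵀ *ᵥ x = w := by
    intro V hV hinj w
    let h : V →ₗ[ℝ] (Fin r → ℝ) := (Rᵀ).mulVecLin.comp V.subtype
    have hhinj : Function.Injective h := by
      rw [← LinearMap.ker_eq_bot, LinearMap.ker_eq_bot']
      rintro ⟨x, hxV⟩ hx0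
      have hRx : Rᵀ *ᵥ x = 0 := hx0
      have hAx : A *ᵥ x = 0 := by
        rw [hA, ← Matrix.mulVec_mulVec, hRx, Matrix.mulVec_zero]
      exact Subtype.ext (hinj x hxV hAx)
    have hfr : Module.finrank ℝ V = Module.finrank ℝ (Fin r → ℝ) := by
      rw [hV, Module.finrank_pi]; simp
    have hhsurj : Function.Surjective h :=
      (LinearMap.injective_iff_surjective_of_finrank_eq_finrank hfr).mp hhinj
    obtain ⟨⟨x, hxV⟩, hx⟩ := hhsurj w
    exact ⟨x, hxV, hx⟩
  -- fixed subspace for the rank statements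
  obtain ⟨V₀, hV₀, hV₀le⟩ := key (σ / 4) (by linarith) (by linarith)
  have hV₀inj : ∀ x ∈ V₀, A *ᵥ x = 0 → x = 0 := by
    intro x hx hAx
    have := hV₀le x hx
    rw [hAx, enorm_zero_real] at this
    have : _root_.enorm x ≤ 0 := by nlinarith
    exact enorm_eq_zero_real (le_antisymm this (enorm_nonneg x))
  -- r ≤ rank A
  have hrA : r ≤ A.rank := by
    let g : V₀ →ₗ[ℝ] (Fin n₁ → ℝ) := A.mulVecLin.comp V₀.subtype
    have hginj : Function.Injective g := by
      rw [← LinearMap.ker_eq_bot, LinearMap.ker_eq_bot']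
      rintro ⟨x, hxV⟩ hx0
      exact Subtype.ext (hV₀inj x hxV hx0)
    have hrg : Module.finrank ℝ (LinearMap.range g) = r := by
      rw [LinearMap.finrank_range_of_inj hginj, hV₀]
    have hle : LinearMap.range g ≤ LinearMap.range A.mulVecLin := by
      rintro y ⟨x, rfl⟩
      exact ⟨x, rfl⟩
    calc r = Module.finrank ℝ (LinearMap.range g) := hrg.symm
      _ ≤ Module.finrank ℝ (LinearMap.range A.mulVecLin) := Submodule.finrank_mono hle
      _ = A.rank := rfl
  have hLrank : L.rank = r := by
    apply le_antisymm
    · simpa using L.rank_le_card_width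
    · exact hrA.trans (Matrix.rank_mul_le_left L Rᵀ)
  have hRrank : R.rank = r := by
    apply le_antisymm
    · simpa using R.rank_le_card_width
    · refine hrA.trans ?_
      rw [← Matrix.rank_transpose R]
      exact Matrix.rank_mul_le_right L Rᵀ
  refine ⟨hLrank, hRrank, ?_⟩
  -- invertibility of the Gram matrices
  have hLdet : IsUnit (Lᵀ * L).det := by
    rw [isUnit_iff_ne_zero]
    intro hdet
    obtain ⟨v, hv0, hv⟩ := (Matrix.exists_mulVec_eq_zero_iff).mpr hdet
    have hLv : L *ᵥ v = 0 := gram_mulVec_eq_zero L hv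
    obtain ⟨x, hxV, hx⟩ := surj V₀ hV₀ hV₀inj v
    have hAx : A *ᵥ x = 0 := by
      rw [hA, ← Matrix.mulVec_mulVec, hx, hLv]
    have hx0 : x = 0 := hV₀inj x hxV hAx
    apply hv0
    rw [← hx, hx0, Matrix.mulVec_zero]
  have hRdet : IsUnit (Rᵀ * R).det := by
    rw [isUnit_iff_ne_zero]
    intro hdet
    obtain ⟨v, hv0, hv⟩ := (Matrix.exists_mulVec_eq_zero_iff).mpr hdet
    have hRv : R *ᵥ v = 0 := gram_mulVec_eq_zero R hv
    obtain ⟨x, hxV, hx⟩ := surj V₀ hV₀ hV₀inj v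
    have hvv : v ⬝ᵥ v = 0 := by
      calc v ⬝ᵥ v = (Rᵀ *ᵥ x) ⬝ᵥ v := by rw [hx]
        _ = x ⬝ᵥ (R *ᵥ v) := by rw [dot_mulVec, Matrix.transpose_transpose]
        _ = 0 := by rw [hRv, dotProduct_zero]
    apply hv0
    apply enorm_eq_zero_real
    have := enorm_sq v
    have h2 : _root_.enorm v ^ 2 = 0 := by rw [this, hvv]
    exact sq_eq_zero_iff.mp h2
  -- the projection matrix Pr and the key identity
  set P := L * (Lᵀ * L)⁻¹ * (Rᵀ * R)⁻¹ * Rᵀ with hP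
  set Pr := R * (Rᵀ * R)⁻¹ * Rᵀ with hPrd
  have hLL : (Lᵀ * L) * (Lᵀ * L)⁻¹ = 1 := Matrix.mul_nonsing_inv _ hLdet
  have hRRinv : (Rᵀ * R)⁻¹ * (Rᵀ * R) = 1 := Matrix.nonsing_inv_mul _ hRdet
  have hPr : Aᵀ * P = Pr := by
    rw [hA, hP, hPrd, Matrix.transpose_mul, Matrix.transpose_transpose]
    calc R * Lᵀ * (L * (Lᵀ * L)⁻¹ * (Rᵀ * R)⁻¹ * Rᵀ)
        = R * ((Lᵀ * L) * (Lᵀ * L)⁻¹ * ((Rᵀ * R)⁻¹ * Rᵀ)) := by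
          simp only [Matrix.mul_assoc]
      _ = R * (Rᵀ * R)⁻¹ * Rᵀ := by rw [hLL]; simp only [Matrix.one_mul, Matrix.mul_assoc]
  have hPrsym : Prᵀ = Pr := by
    rw [hPrd]
    simp only [Matrix.transpose_mul, Matrix.transpose_transpose, Matrix.transpose_nonsing_inv]
    simp only [Matrix.transpose_mul, Matrix.transpose_transpose, Matrix.mul_assoc]
  have hPridem : Pr * Pr = Pr := by
    rw [hPrd]
    calc R * (Rᵀ * R)⁻¹ * Rᵀ * (R * (Rᵀ * R)⁻¹ * Rᵀ)
        = R * ((Rᵀ * R)⁻¹ * (Rᵀ * R) * ((Rᵀ * R)⁻¹ * Rᵀ)) := by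
          simp only [Matrix.mul_assoc]
      _ = R * (Rᵀ * R)⁻¹ * Rᵀ := by
          rw [hRRinv]; simp only [Matrix.one_mul, Matrix.mul_assoc]
  -- spectral norm bound for each admissible c
  have hbound : ∀ c : ℝ, 0 < c → c < σ / 2 → spec P ≤ 1 / c := by
    intro c hc hcσ
    obtain ⟨V, hVr, hVc⟩ := key c hc hcσ
    have hVinj : ∀ x ∈ V, A *ᵥ x = 0 → x = 0 := by
      intro x hx hAx
      have := hVc x hx
      rw [hAx, enorm_zero_real] at this
      have hle : _root_.enorm x ≤ 0 := by nlinarith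
      exact enorm_eq_zero_real (le_antisymm hle (enorm_nonneg x))
    -- pointwise bound : c * ‖P u‖ ≤ ‖u‖
    have hpt : ∀ u : Fin n₂ → ℝ, c * _root_.enorm (P *ᵥ u) ≤ _root_.enorm u := by
      intro u
      set w : Fin r → ℝ := ((Lᵀ * L)⁻¹ * (Rᵀ * R)⁻¹ * Rᵀ) *ᵥ u with hw
      obtain ⟨x, hxV, hx⟩ := surj V hVr hVinj w
      have hPu : P *ᵥ u = A *ᵥ x := by
        have h1 : P = L * ((Lᵀ * L)⁻¹ * (Rᵀ * R)⁻¹ * Rᵀ) := by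
          rw [hP]; simp only [Matrix.mul_assoc]
        rw [h1, ← Matrix.mulVec_mulVec, ← hw, ← hx, Matrix.mulVec_mulVec, hA]
      have hcx : c * _root_.enorm x ≤ _root_.enorm (P *ᵥ u) := by rw [hPu]; exact hVc x hxV
      have hdot : (P *ᵥ u) ⬝ᵥ (P *ᵥ u) = x ⬝ᵥ (Pr *ᵥ u) := by
        calc (P *ᵥ u) ⬝ᵥ (P *ᵥ u) = (A *ᵥ x) ⬝ᵥ (P *ᵥ u) := by rw [hPu]
          _ = x ⬝ᵥ (Aᵀ *ᵥ (P *ᵥ u)) := dot_mulVec _ _ _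
          _ = x ⬝ᵥ (Pr *ᵥ u) := by rw [Matrix.mulVec_mulVec, hPr]
      have hsq : _root_.enorm (P *ᵥ u) ^ 2 ≤ _root_.enorm x * _root_.enorm u := by
        rw [enorm_sq, hdot]
        calc x ⬝ᵥ (Pr *ᵥ u) ≤ _root_.enorm x * _root_.enorm (Pr *ᵥ u) := dot_le _ _
          _ ≤ _root_.enorm x * _root_.enorm u := by
              exact mul_le_mul_of_nonneg_left (contraction Pr hPrsym hPridem u) (enorm_nonneg x)
      rcases eq_or_lt_of_le (enorm_nonneg (P *ᵥ u)) with h0 | h0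
      · rw [← h0, mul_zero]; exact enorm_nonneg u
      · exact aux_pt hc hsq hcx h0 (enorm_nonneg x) (enorm_nonneg u)
    -- conclude the spectral bound
    rw [spec, sval]
    apply Real.sSup_le
    · rintro t ⟨W, hW1, hWle⟩
      obtain ⟨x, hxW, hx0⟩ : ∃ x ∈ W, x ≠ 0 := by
        by_contra hcon
        push_neg at hcon
        have : W = ⊥ := by
          rw [Submodule.eq_bot_iff]
          exact hcon
        rw [this, finrank_bot] at hW1
        omega
      have h1 := hWle x hxW
      have h2 := hpt x
      have hex : 0 < _root_.enorm x := enorm_pos_real hx0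
      rw [le_div_iff₀ hc]
      exact aux_spec hc h1 h2 hex
    · positivity
  -- take c → σ/2
  have hfinal : ∀ ε : ℝ, 0 < ε → spec P ≤ 2 / σ + ε := by
    intro ε hε
    have h2σ : 0 < 2 / σ := by positivity
    set c := (2 / σ + ε)⁻¹ with hcdef
    have hc : 0 < c := by positivity
    have hcσ : c < σ / 2 := by
      have h1 : (2 / σ + ε)⁻¹ < (2 / σ)⁻¹ := by
        apply inv_strictAnti₀ h2σ
        linarith
      have h2 : (2 / σ)⁻¹ = σ / 2 := by
        rw [inv_div]
      rw [hcdef, ← h2]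
      exact h1
    have := hbound c hc hcσ
    rwa [hcdef, one_div, inv_inv] at this
  by_contra hcon
  push_neg at hcon
  have hε : 0 < (spec P - 2 / σ) / 2 := by linarith
  have := hfinal _ hε
  linarith
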